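/- For every positive integer k, the multiset over Z_2^{2k} of length 4k consisting of 2k − 1 copies of the zero vector, the 2k standard basis vectors e_1, ..., e_{2k}, and the vector e_1 + e_2 + ... + e_{2k}, is a zero-sum sequence that contains no zero-sum subsequence of length 2k. -/

import Mathlib

lemma multiset_decomp {α : Type*} [DecidableEq α] {T A B : Multiset α} (h : T ≤ A + B) :
    ∃ TA TB, TA ≤ A ∧ TB ≤ B ∧ T = TA + TB := by
  refine ⟨T ∩ A, T - A, Multiset.inter_le_right, ?_, ?_⟩
  · rw [tsub_le_iff_right, add_comm]; exact h
  · ext a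
    have := Multiset.le_iff_count.mp h a
    simp only [Multiset.count_add, Multiset.count_inter, Multiset.count_sub] at *
    omega

lemma e_inj (n : ℕ) : Function.Injective (fun j : Fin n => (Pi.single j 1 : Fin n → ZMod 2)) := by
  intro i j hij
  by_contra hne
  have := congrFun hij i
  simp [Pi.single_apply, hne] at this

lemma sum_e (n : ℕ) (s : Finset (Fin n)) (i : Fin n) :
    (∑ j ∈ s, (Pi.single j 1 : Fin n → ZMod 2)) i = if i ∈ s then 1 else 0 := by
  rw [Finset.sum_apply]
  simp only [Pi.single_apply]
  exact Finset.sum_ite_eq s i (fun _ => 1)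

lemma sum_e_eq_zero_iff (n : ℕ) (s : Finset (Fin n)) :
    (∑ j ∈ s, (Pi.single j 1 : Fin n → ZMod 2)) = 0 ↔ s = ∅ := by
  constructor
  · intro h
    by_contra hne
    obtain ⟨i, hi⟩ := Finset.nonempty_iff_ne_empty.mpr hne
    have := congrFun h i
    rw [sum_e n s i, if_pos hi] at this
    simp at this
  · rintro rfl; simp

theorem construction_d_eq_two_k (k : ℕ) (hk : 0 < k) :
    let e : Fin (2 * k) → (Fin (2 * k) → ZMod 2) := fun j => Pi.single j 1
    let S : Multiset (Fin (2 * k) → ZMod 2) :=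
      Multiset.replicate (2 * k - 1) 0 + Multiset.map e Finset.univ.val
        + {∑ j, e j}
    Multiset.card S = 4 * k ∧ S.sum = 0 ∧
      ¬ ∃ T ≤ S, Multiset.card T = 2 * k ∧ T.sum = 0 := by
  intro e S
  have hw : ∀ x : Fin (2 * k) → ZMod 2, x + x = 0 := fun x => funext fun i => CharTwo.add_self_eq_zero (x i)
  refine ⟨?_, ?_, ?_⟩
  · simp only [S, Multiset.card_add, Multiset.card_replicate, Multiset.card_map,
      Multiset.card_singleton, Finset.card_val, Finset.card_univ, Fintype.card_fin]
    omega
  · simp only [S, Multiset.sum_add, Multiset.sum_replicate, Multiset.sum_singleton,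
      smul_zero, zero_add]
    have : (Multiset.map e Finset.univ.val).sum = ∑ j, e j := rfl
    rw [this, hw]
  · rintro ⟨T, hTS, hcard, hsum⟩
    obtain ⟨T12, T2, hT12, hT2, rfl⟩ := multiset_decomp hTS
    obtain ⟨T0, T1, hT0, hT1, rfl⟩ := multiset_decomp hT12
    -- T0 is replicate of zeros
    obtain ⟨a, ha, rfl⟩ := Multiset.le_replicate_iff.mp hT0
    -- T1 corresponds to a finset
    have hinj : Function.Injective e := e_inj (2 * k)
    have hnodup : T1.Nodup :=
      Multiset.nodup_of_le hT1 (Multiset.Nodup.map hinj Finset.univ.nodup)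
    set s : Finset (Fin (2 * k)) := Finset.univ.filter (fun j => e j ∈ T1) with hs
    have hT1eq : T1 = Multiset.map e s.val := by
      refine (Multiset.Nodup.ext hnodup (Multiset.Nodup.map hinj s.nodup)).mpr fun x => ?_
      constructor
      · intro hx
        have hx' : x ∈ Multiset.map e Finset.univ.val := Multiset.mem_of_le hT1 hx
        obtain ⟨j, _, rfl⟩ := Multiset.mem_map.mp hx'
        exact Multiset.mem_map_of_mem e (by simp [hs, hx])
      · intro hx
        obtain ⟨j, hj, rfl⟩ := Multiset.mem_map.mp hx
        simpa [hs] using hj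
    have hT1sum : T1.sum = ∑ j ∈ s, e j := by rw [hT1eq]; rfl
    have hT1card : Multiset.card T1 = s.card := by rw [hT1eq]; simp
    -- T2 ≤ {w}
    obtain ⟨b, hb, rfl⟩ := Multiset.le_replicate_iff.mp (show T2 ≤ Multiset.replicate 1 (∑ j, e j) from hT2)
    simp only [Multiset.card_add, Multiset.card_replicate, Multiset.sum_add,
      Multiset.sum_replicate, smul_zero, zero_add, hT1sum, hT1card] at hcard hsum
    interval_cases b
    · -- no w : sum = ∑ s = 0 → s = ∅
      simp only [zero_smul, add_zero] at hsum
      rw [sum_e_eq_zero_iff] at hsum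
      rw [hsum] at hcard
      simp at hcard
      omega
    · -- with w : ∑ s + w = 0 → s = univ
      simp only [one_smul] at hsum
      have : (∑ j ∈ s, e j) + ∑ j, e j = ∑ j ∈ sᶜ, e j := by
        rw [← Finset.sum_add_sum_compl s e, ← add_assoc, hw, zero_add]
      rw [this, sum_e_eq_zero_iff] at hsum
      have hsu : s = Finset.univ := by
        rw [← compl_compl s, hsum]; simp
      rw [hsu] at hcard
      simp [Finset.card_univ] at hcard
      omega
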